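/- Let 𝔏 = ⊕_{m∈ℤ} 𝔏_m be a graded Lie algebra over ℂ with a bilinear form B on its local part satisfying conditions (i)–(v), whose local part realizes the pentad of Cartan type P(r,n;A,D,Γ). Then 𝔏 is transitive if and only if the matrix D ∈ M(r,n;ℂ) has rank r and has no zero column. In particular, when r = n, 𝔏 is transitive if and only if the square matrix D is invertible. -/

import Mathlib

noncomputable section

open Matrix

/-- A graded Lie algebra `L = ⊕ G i` together with a bilinear form `B` on its local part
(encoded as a bilinear form on `L`, only its restriction to the local part matters),
satisfying conditions (i)–(v) of the paper. -/
def GoodGrading (L : Type) [LieRing L] [LieAlgebra ℂ L] (G : ℤ → Submodule ℂ L)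
    (B : LinearMap.BilinForm ℂ L) : Prop :=
  iSupIndep G ∧ (⨆ i, G i) = ⊤ ∧
  (∀ i j : ℤ, ∀ x ∈ G i, ∀ y ∈ G j, ⁅x, y⁆ ∈ G (i + j)) ∧
  (LieSubalgebra.lieSpan ℂ L ((G (-1) : Set L) ∪ (G 0 : Set L) ∪ (G 1 : Set L)) = ⊤) ∧
  (∀ i : ℤ, 1 ≤ i →
    G (i + 1) = Submodule.span ℂ {z : L | ∃ x ∈ G 1, ∃ y ∈ G i, z = ⁅x, y⁆} ∧
    G (-(i + 1)) = Submodule.span ℂ {z : L | ∃ x ∈ G (-1), ∃ y ∈ G (-i), z = ⁅x, y⁆}) ∧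
  (∀ i : ℤ, (i = 0 ∨ i = 1) →
    (∀ x ∈ G i, (∀ y ∈ G (-i), B x y = 0) → x = 0) ∧
    (∀ y ∈ G (-i), (∀ x ∈ G i, B x y = 0) → y = 0) ∧
    (∀ a ∈ G 0, ∀ x ∈ G i, ∀ y ∈ G (-i), B ⁅a, x⁆ y + B x ⁅a, y⁆ = 0)) ∧
  (∀ a ∈ G 0, ∀ x ∈ G 1, ∀ y ∈ G (-1), B a ⁅x, y⁆ = B ⁅a, x⁆ y) ∧
  (∀ i : ℤ, 2 ≤ i → ∀ x ∈ G i, (∀ y ∈ G (-1), ⁅x, y⁆ = 0) → x = 0) ∧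
  (∀ i : ℤ, i ≤ -2 → ∀ x ∈ G i, (∀ y ∈ G 1, ⁅x, y⁆ = 0) → x = 0)

/-- The local part of the graded Lie algebra `L` realizes the pentad of Cartan type
`P(r,n;A,D,Γ)` (with `Γ = diagonal γ`) via the bases `ε`, `e`, `f`. -/
def RealizesPentad (L : Type) [LieRing L] [LieAlgebra ℂ L] (G : ℤ → Submodule ℂ L)
    (B : LinearMap.BilinForm ℂ L) {r n : ℕ}
    (A : Matrix (Fin r) (Fin r) ℂ) (D : Matrix (Fin r) (Fin n) ℂ) (γ : Fin n → ℂ)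
    (ε : Fin r → L) (e : Fin n → L) (f : Fin n → L) : Prop :=
  -- bases of the local components
  (LinearIndependent ℂ ε ∧ Submodule.span ℂ (Set.range ε) = G 0) ∧
  (LinearIndependent ℂ e ∧ Submodule.span ℂ (Set.range e) = G 1) ∧
  (LinearIndependent ℂ f ∧ Submodule.span ℂ (Set.range f) = G (-1)) ∧
  -- 𝔏₀ is abelian
  (∀ x ∈ G 0, ∀ y ∈ G 0, ⁅x, y⁆ = 0) ∧
  -- structure constants of the pentad
  (∀ (i : Fin r) (j : Fin n), ⁅ε i, e j⁆ = D i j • e j) ∧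
  (∀ (i : Fin r) (j : Fin n), ⁅ε i, f j⁆ = (-D i j) • f j) ∧
  (∀ i j : Fin n, ⁅e i, f j⁆
    = if i = j then ∑ k, (Aᵀ * D * Matrix.diagonal γ) k i • ε k else 0) ∧
  -- the bilinear form on the local part
  (∀ i j : Fin r, B (ε i) (ε j) = (A⁻¹)ᵀ i j) ∧
  (∀ i j : Fin n, B (e i) (f j) = if i = j then γ i else 0) ∧
  (∀ i ∈ ({-1, 0, 1} : Set ℤ), ∀ j ∈ ({-1, 0, 1} : Set ℤ), i + j ≠ 0 →
    ∀ x ∈ G i, ∀ y ∈ G j, B x y = 0)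

/-- Transitivity of a graded Lie algebra in the sense of Kac. -/
def TransitiveGr (L : Type) [LieRing L] [LieAlgebra ℂ L] (G : ℤ → Submodule ℂ L) : Prop :=
  (∀ i : ℤ, 0 ≤ i → ∀ x ∈ G i, (∀ y ∈ G (-1), ⁅x, y⁆ = 0) → x = 0) ∧
  (∀ i : ℤ, i ≤ 0 → ∀ x ∈ G i, (∀ y ∈ G 1, ⁅x, y⁆ = 0) → x = 0)

private lemma rank_row_indep {r n : ℕ} (D : Matrix (Fin r) (Fin n) ℂ) :
    D.rank = r ↔ LinearIndependent ℂ (fun i => D i) := by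
  rw [Matrix.rank_eq_finrank_span_row, linearIndependent_iff_card_eq_finrank_span,
    Set.finrank, Fintype.card_fin, eq_comm]
  rfl

private lemma rank_eq_card_iff_rows {r n : ℕ} (D : Matrix (Fin r) (Fin n) ℂ) :
    D.rank = r ↔ ∀ c : Fin r → ℂ, (∀ j, ∑ i, c i * D i j = 0) → c = 0 := by
  rw [rank_row_indep, Fintype.linearIndependent_iff]
  constructor
  · intro h c hc
    funext i
    refine h c ?_ i
    funext j
    simpa [Finset.sum_apply] using hc j
  · intro h g hg i
    have : g = 0 := by
      refine h g fun j => ?_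
      simpa [Finset.sum_apply] using congrFun hg j
    exact congrFun this i

private lemma rank_eq_iff_det {r : ℕ} (D : Matrix (Fin r) (Fin r) ℂ) :
    D.rank = r ↔ IsUnit D.det := by
  rw [rank_row_indep, show (fun i => D i) = D.row from rfl, ← Matrix.vecMul_injective_iff, Matrix.vecMul_injective_iff_isUnit,
    Matrix.isUnit_iff_isUnit_det]

/-- A graded Lie algebra satisfying (i)–(v) whose local part realizes the
pentad of Cartan type `P(r,n;A,D,Γ)` is transitive iff `rank D = r` and `D` has no zero
column; when `r = n` this says `D` is invertible. -/
theorem stmt_17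
    (L : Type) [LieRing L] [LieAlgebra ℂ L]
    (G : ℤ → Submodule ℂ L)
    (B : LinearMap.BilinForm ℂ L)
    (hG : GoodGrading L G B)
    (r n : ℕ) (hr : 0 < r) (hn : 0 < n)
    (A : Matrix (Fin r) (Fin r) ℂ) (hA : IsUnit A.det)
    (D : Matrix (Fin r) (Fin n) ℂ)
    (γ : Fin n → ℂ) (hγ : ∀ j, γ j ≠ 0)
    (ε : Fin r → L) (e : Fin n → L) (f : Fin n → L)
    (hreal : RealizesPentad L G B A D γ ε e f) :
    (TransitiveGr L G ↔ (D.rank = r ∧ ∀ j : Fin n, ∃ i : Fin r, D i j ≠ 0)) ∧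
    (∀ hrn : r = n, TransitiveGr L G
      ↔ IsUnit (Matrix.reindex (Equiv.refl (Fin r)) (finCongr hrn.symm) D).det) := by
  classical
  obtain ⟨hindep, htop, hbrk, hgen, hi, hii, hiii, hiv, hv⟩ := hG
  obtain ⟨⟨hε_li, hε_sp⟩, ⟨he_li, he_sp⟩, ⟨hf_li, hf_sp⟩, hab, hεe, hεf, hef,
    hBεε, hBef, hBloc⟩ := hreal
  set M : Matrix (Fin r) (Fin n) ℂ := Aᵀ * D * Matrix.diagonal γ with hM
  -- entries of M
  have hMentry : ∀ m j, M m j = (∑ i, A i m * D i j) * γ j := by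
    intro m j
    rw [hM, Matrix.mul_diagonal]
    simp [Matrix.mul_apply, Matrix.transpose_apply]
  -- column j of M vanishes iff column j of D does
  have hcol : ∀ j, (∀ i, D i j = 0) ↔ (∀ m, M m j = 0) := by
    intro j
    constructor
    · intro h m
      simp [hMentry, h]
    · intro h
      have hAdet : IsUnit (Aᵀ).det := by rwa [Matrix.det_transpose]
      have hinj : Function.Injective (Aᵀ).mulVec :=
        Matrix.mulVec_injective_iff_isUnit.mpr ((Matrix.isUnit_iff_isUnit_det _).mpr hAdet)
      have h0 : (Aᵀ).mulVec (fun i => D i j) = (Aᵀ).mulVec 0 := by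
        funext m
        have := h m
        rw [hMentry] at this
        have h2 : ∑ i, A i m * D i j = 0 := by
          rcases mul_eq_zero.mp this with h' | h'
          · exact h'
          · exact absurd h' (hγ j)
        simp [Matrix.mulVec, dotProduct, Matrix.transpose_apply, mul_comm]
        simpa [mul_comm] using h2
      have := hinj h0
      intro i
      exact congrFun this i
  -- membership of basis vectors
  have hε_mem : ∀ i, ε i ∈ G 0 := fun i => hε_sp ▸ Submodule.subset_span ⟨i, rfl⟩
  have he_mem : ∀ j, e j ∈ G 1 := fun j => he_sp ▸ Submodule.subset_span ⟨j, rfl⟩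
  have hf_mem : ∀ j, f j ∈ G (-1) := fun j => hf_sp ▸ Submodule.subset_span ⟨j, rfl⟩
  -- sums and brackets
  have lie_sum' : ∀ (y : L) (k : ℕ) (g : Fin k → L), ⁅y, ∑ i, g i⁆ = ∑ i, ⁅y, g i⁆ := by
    intro y k g
    have h := map_sum (LieAlgebra.ad ℂ L y) g Finset.univ
    simpa only [LieAlgebra.ad_apply] using h
  have sum_lie' : ∀ (y : L) (k : ℕ) (g : Fin k → L), ⁅∑ i, g i, y⁆ = ∑ i, ⁅g i, y⁆ := by
    intro y k g
    rw [← lie_skew, lie_sum' y k g, ← Finset.sum_neg_distrib]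
    exact Finset.sum_congr rfl fun i _ => lie_skew _ _
  -- bracket computations
  have hbr1 : ∀ (c : Fin r → ℂ) (j : Fin n),
      ⁅∑ i, c i • ε i, f j⁆ = (-(∑ i, c i * D i j)) • f j := by
    intro c j
    rw [sum_lie' _ _ _]
    simp only [smul_lie, hεf, smul_smul]
    rw [← Finset.sum_smul]
    congr 1
    simp [mul_neg, Finset.sum_neg_distrib]
  have hbr2 : ∀ (c : Fin r → ℂ) (j : Fin n),
      ⁅∑ i, c i • ε i, e j⁆ = (∑ i, c i * D i j) • e j := by
    intro c j
    rw [sum_lie' _ _ _]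
    simp only [smul_lie, hεe, smul_smul]
    rw [← Finset.sum_smul]
  have hbr3 : ∀ (c : Fin n → ℂ) (k : Fin n),
      ⁅∑ j, c j • e j, f k⁆ = ∑ m, (c k * M m k) • ε m := by
    intro c k
    rw [sum_lie' _ _ _]
    simp only [smul_lie, hef]
    rw [Finset.sum_eq_single k]
    · simp [Finset.smul_sum, smul_smul]
    · intro b _ hb
      simp [hb]
    · intro h
      exact absurd (Finset.mem_univ k) h
  have hbr4 : ∀ (c : Fin n → ℂ) (k : Fin n),
      ⁅∑ j, c j • f j, e k⁆ = ∑ m, (-(c k * M m k)) • ε m := by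
    intro c k
    have : ⁅∑ j, c j • f j, e k⁆ = -⁅e k, ∑ j, c j • f j⁆ := by rw [lie_skew]
    rw [this, lie_sum' _ _ _]
    simp only [lie_smul, hef]
    rw [Finset.sum_eq_single k]
    · simp [Finset.smul_sum, smul_smul, neg_smul, Finset.sum_neg_distrib]
    · intro b _ hb
      simp [Ne.symm hb]
    · intro h
      exact absurd (Finset.mem_univ k) h
  -- the main equivalence
  have main : TransitiveGr L G ↔
      ((∀ c : Fin r → ℂ, (∀ j, ∑ i, c i * D i j = 0) → c = 0) ∧
       ∀ j : Fin n, ∃ i : Fin r, D i j ≠ 0) := by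
    constructor
    · rintro ⟨ht1, ht2⟩
      constructor
      · intro c hc
        have hx0 : (∑ i, c i • ε i) ∈ G 0 := by
          exact Submodule.sum_mem _ fun i _ => Submodule.smul_mem _ _ (hε_mem i)
        have hxy : ∀ y ∈ G (-1), ⁅∑ i, c i • ε i, y⁆ = 0 := by
          intro y hy
          rw [← hf_sp] at hy
          obtain ⟨d, hd⟩ := (Submodule.mem_span_range_iff_exists_fun ℂ).mp hy
          rw [← hd, lie_sum' _ _ _]
          refine Finset.sum_eq_zero fun j _ => ?_
          rw [lie_smul, hbr1, hc j]
          simp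
        have hx := ht1 0 le_rfl _ hx0 hxy
        funext i
        exact Fintype.linearIndependent_iff.mp hε_li c hx i
      · intro j
        by_contra hcon
        push_neg at hcon
        have hMj : ∀ m, M m j = 0 := (hcol j).mp hcon
        have hey : ∀ y ∈ G (-1), ⁅e j, y⁆ = 0 := by
          intro y hy
          rw [← hf_sp] at hy
          obtain ⟨d, hd⟩ := (Submodule.mem_span_range_iff_exists_fun ℂ).mp hy
          rw [← hd, lie_sum' _ _ _]
          refine Finset.sum_eq_zero fun k _ => ?_
          rw [lie_smul, hef]
          by_cases hjk : j = k
          · subst hjk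
            simp only [if_pos rfl]
            rw [show (∑ m, M m j • ε m) = 0 from Finset.sum_eq_zero fun m _ => by
              rw [hMj m, zero_smul]]
            simp
          · simp [hjk]
        have := ht1 1 zero_le_one _ (he_mem j) hey
        exact he_li.ne_zero j this
    · rintro ⟨hk, hnz⟩
      have hMnz : ∀ k : Fin n, ∃ m, M m k ≠ 0 := by
        intro k
        by_contra h
        push_neg at h
        obtain ⟨i, hi'⟩ := hnz k
        exact hi' (((hcol k).mpr h) i)
      constructor
      · intro i hi0 x hx hxy
        by_cases h2 : 2 ≤ i
        · exact hiv i h2 x hx hxy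
        · have : i = 0 ∨ i = 1 := by omega
          rcases this with rfl | rfl
          · rw [← hε_sp] at hx
            obtain ⟨c, hc⟩ := (Submodule.mem_span_range_iff_exists_fun ℂ).mp hx
            have hcz : c = 0 := by
              refine hk c fun j => ?_
              have := hxy (f j) (hf_mem j)
              rw [← hc, hbr1] at this
              rcases smul_eq_zero.mp this with h' | h'
              · simpa [neg_eq_zero] using h'
              · exact absurd h' (hf_li.ne_zero j)
            rw [← hc, hcz]
            simp
          · rw [← he_sp] at hx
            obtain ⟨c, hc⟩ := (Submodule.mem_span_range_iff_exists_fun ℂ).mp hx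
            have hcz : ∀ k, c k = 0 := by
              intro k
              have := hxy (f k) (hf_mem k)
              rw [← hc, hbr3] at this
              have hall := Fintype.linearIndependent_iff.mp hε_li _ this
              obtain ⟨m, hm⟩ := hMnz k
              have := hall m
              exact (mul_eq_zero.mp this).resolve_right hm
            rw [← hc]
            simp [hcz]
      · intro i hi0 x hx hxy
        by_cases h2 : i ≤ -2
        · exact hv i h2 x hx hxy
        · have : i = 0 ∨ i = -1 := by omega
          rcases this with rfl | rfl
          · rw [← hε_sp] at hx
            obtain ⟨c, hc⟩ := (Submodule.mem_span_range_iff_exists_fun ℂ).mp hx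
            have hcz : c = 0 := by
              refine hk c fun j => ?_
              have := hxy (e j) (he_mem j)
              rw [← hc, hbr2] at this
              rcases smul_eq_zero.mp this with h' | h'
              · exact h'
              · exact absurd h' (he_li.ne_zero j)
            rw [← hc, hcz]
            simp
          · rw [← hf_sp] at hx
            obtain ⟨c, hc⟩ := (Submodule.mem_span_range_iff_exists_fun ℂ).mp hx
            have hcz : ∀ k, c k = 0 := by
              intro k
              have := hxy (e k) (he_mem k)
              rw [← hc, hbr4] at this
              have hall := Fintype.linearIndependent_iff.mp hε_li _ this
              obtain ⟨m, hm⟩ := hMnz k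
              have := hall m
              rw [neg_eq_zero] at this
              exact (mul_eq_zero.mp this).resolve_right hm
            rw [← hc]
            simp [hcz]
  constructor
  · rw [main, rank_eq_card_iff_rows]
  · intro hrn
    subst hrn
    have hre : (Matrix.reindex (Equiv.refl (Fin r)) (finCongr rfl) D) = D := by
      ext i j
      simp [Matrix.reindex_apply]
    rw [hre, main]
    constructor
    · rintro ⟨h1, _⟩
      exact (rank_eq_iff_det D).mp ((rank_eq_card_iff_rows D).mpr h1)
    · intro hd
      refine ⟨(rank_eq_card_iff_rows D).mp ((rank_eq_iff_det D).mpr hd), fun j => ?_⟩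
      by_contra h
      push_neg at h
      rw [Matrix.det_eq_zero_of_column_eq_zero j h] at hd
      simpa using hd

end
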